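/- For every real number p > 2 there exists a constant κ_p > 1 such that for every measure space (X, μ), every positive integer d, all nonnegative measurable functions f₁, …, f_d : X → [0, ∞), and all positive weights a₁, …, a_d, one has ∫_X (∑_{i=1}^{d} a_i f_i)^p dμ ≥ ∑_{i=1}^{d} a_i^p ∫_X f_i^p dμ + (p/2)·κ_p·∑_{1 ≤ i ≠ j ≤ d} a_i^{p−1} a_j ∫_X f_i^{p−1} f_j dμ, where the last sum is over ordered pairs (i, j) with i ≠ j (all integrals being values in [0, ∞]). -/

import Mathlib

open MeasureTheory Finset ENNReal

private lemma real_key (p : ℝ) (hp : 2 < p) {d : ℕ} (y : Fin d → ℝ) (hy : ∀ i, 0 ≤ y i) :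
    ∑ i, y i ^ p + (p - 1) * ∑ i, ∑ j ∈ Finset.univ \ {i}, y i ^ (p - 1) * y j
      ≤ (∑ i, y i) ^ p := by
  have hp1 : (1:ℝ) ≤ p - 1 := by linarith
  set s := ∑ i, y i with hs
  have hs0 : 0 ≤ s := Finset.sum_nonneg fun i _ => hy i
  have hyle : ∀ i, y i ≤ s := fun i =>
    Finset.single_le_sum (fun j _ => hy j) (Finset.mem_univ i)
  have hsd : ∀ i : Fin d, ∑ j ∈ Finset.univ \ {i}, y i ^ (p - 1) * y j
      = y i ^ (p - 1) * (s - y i) := by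
    intro i
    rw [← Finset.mul_sum, Finset.sum_sdiff_eq_sub (Finset.subset_univ _),
      Finset.sum_singleton]
  simp only [hsd]
  rcases eq_or_lt_of_le hs0 with h0 | hpos
  · have hy0 : ∀ i, y i = 0 := fun i => le_antisymm (by rw [h0]; exact hyle i) (hy i)
    simp [hy0, ← h0, Real.zero_rpow (by positivity : p ≠ 0)]
  · -- pointwise bound for each i
    have key : ∀ i, y i ^ p + (p - 1) * (y i ^ (p - 1) * (s - y i)) ≤ y i * s ^ (p - 1) := by
      intro i
      rcases eq_or_lt_of_le (hy i) with h0 | hposi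
      · simp [← h0, Real.zero_rpow (by positivity : p ≠ 0),
          Real.zero_rpow (show p - 1 ≠ 0 by positivity)]
      · set x := (s - y i) / y i with hx
        have hx0 : 0 ≤ x := div_nonneg (by linarith [hyle i]) hposi.le
        have hb : 1 + (p - 1) * x ≤ (1 + x) ^ (p - 1) :=
          one_add_mul_self_le_rpow_one_add (by linarith) hp1
        have h1x : 1 + x = s / y i := by
          rw [hx, eq_div_iff hposi.ne']; field_simp; ring
        have hyp : y i ^ p = y i * y i ^ (p - 1) := by
          rw [← Real.rpow_one_add' hposi.le (by positivity)]; ring_nf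
        have hdiv : (s / y i) ^ (p - 1) = s ^ (p - 1) / y i ^ (p - 1) :=
          Real.div_rpow hs0 hposi.le _
        have hmul := mul_le_mul_of_nonneg_left hb (by positivity : (0:ℝ) ≤ y i ^ p)
        calc y i ^ p + (p - 1) * (y i ^ (p - 1) * (s - y i))
            = y i ^ p * (1 + (p - 1) * x) := by
              rw [hyp, hx]; field_simp
          _ ≤ y i ^ p * (1 + x) ^ (p - 1) := hmul
          _ = y i * s ^ (p - 1) := by
              rw [h1x, hdiv, hyp]
              field_simp
    calc ∑ i, y i ^ p + (p - 1) * ∑ i, y i ^ (p - 1) * (s - y i)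
        = ∑ i, (y i ^ p + (p - 1) * (y i ^ (p - 1) * (s - y i))) := by
          rw [Finset.sum_add_distrib, Finset.mul_sum]
      _ ≤ ∑ i, y i * s ^ (p - 1) := Finset.sum_le_sum fun i _ => key i
      _ = s * s ^ (p - 1) := by rw [← Finset.sum_mul]
      _ = s ^ p := by
          rw [← Real.rpow_one_add' hs0 (by positivity)]; ring_nf

private lemma ennreal_key (p : ℝ) (hp : 2 < p) {d : ℕ} (u : Fin d → ℝ≥0∞)
    (hu : ∀ i, u i ≠ ⊤) :
    ∑ i, u i ^ p + ENNReal.ofReal (p - 1) *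
        ∑ i, ∑ j ∈ Finset.univ \ {i}, u i ^ (p - 1) * u j
      ≤ (∑ i, u i) ^ p := by
  set y : Fin d → ℝ := fun i => (u i).toReal with hy
  have hy0 : ∀ i, 0 ≤ y i := fun i => ENNReal.toReal_nonneg
  have hui : ∀ i, u i = ENNReal.ofReal (y i) := fun i => (ENNReal.ofReal_toReal (hu i)).symm
  have hp0 : (0:ℝ) ≤ p := by linarith
  have hp10 : (0:ℝ) ≤ p - 1 := by linarith
  calc ∑ i, u i ^ p + ENNReal.ofReal (p - 1) *
        ∑ i, ∑ j ∈ Finset.univ \ {i}, u i ^ (p - 1) * u j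
      = ENNReal.ofReal (∑ i, y i ^ p + (p - 1) *
          ∑ i, ∑ j ∈ Finset.univ \ {i}, y i ^ (p - 1) * y j) := by
        rw [ENNReal.ofReal_add (Finset.sum_nonneg fun i _ => by positivity)
          (by positivity), ENNReal.ofReal_sum_of_nonneg (fun i _ => by positivity),
          ENNReal.ofReal_mul hp10,
          ENNReal.ofReal_sum_of_nonneg (fun i _ => Finset.sum_nonneg fun j _ => by positivity)]
        congr 1
        · exact Finset.sum_congr rfl fun i _ => by
            rw [hui i, ENNReal.ofReal_rpow_of_nonneg (hy0 i) hp0]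
        · congr 1
          refine Finset.sum_congr rfl fun i _ => ?_
          rw [ENNReal.ofReal_sum_of_nonneg (fun j _ => by positivity)]
          refine Finset.sum_congr rfl fun j _ => ?_
          rw [hui i, hui j, ENNReal.ofReal_rpow_of_nonneg (hy0 i) hp10,
            ← ENNReal.ofReal_mul (by positivity)]
    _ ≤ ENNReal.ofReal ((∑ i, y i) ^ p) :=
        ENNReal.ofReal_le_ofReal (real_key p hp y hy0)
    _ = (∑ i, u i) ^ p := by
        rw [← ENNReal.ofReal_rpow_of_nonneg (Finset.sum_nonneg fun i _ => hy0 i) hp0,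
          ENNReal.ofReal_sum_of_nonneg (fun i _ => hy0 i)]
        congr 1
        exact Finset.sum_congr rfl fun i _ => (hui i).symm

theorem stmt7 (p : ℝ) (hp : 2 < p) :
    ∃ κ : ℝ, 1 < κ ∧
      ∀ (X : Type*) [MeasurableSpace X] (μ : Measure X) (d : ℕ), 0 < d →
        ∀ f : Fin d → X → ℝ≥0∞, (∀ i, Measurable (f i)) → (∀ i x, f i x ≠ ⊤) →
        ∀ a : Fin d → ℝ, (∀ i, 0 < a i) →
          ∑ i, ENNReal.ofReal (a i ^ p) * ∫⁻ x, f i x ^ p ∂μ +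
              ENNReal.ofReal (p / 2 * κ) *
                ∑ i, ∑ j ∈ Finset.univ \ {i},
                  ENNReal.ofReal (a i ^ (p - 1) * a j) *
                    ∫⁻ x, f i x ^ (p - 1) * f j x ∂μ ≤
            ∫⁻ x, (∑ i, ENNReal.ofReal (a i) * f i x) ^ p ∂μ := by
  have hp0 : (0:ℝ) < p := by linarith
  refine ⟨2 * (p - 1) / p, by rw [lt_div_iff₀ hp0]; linarith, ?_⟩
  intro X _ μ d hd f hf hft a ha
  have hκ : p / 2 * (2 * (p - 1) / p) = p - 1 := by field_simp
  rw [hκ]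
  set g : Fin d → X → ℝ≥0∞ := fun i x => ENNReal.ofReal (a i) * f i x with hg
  have hgm : ∀ i, Measurable (g i) := fun i => (hf i).const_mul _
  have hgt : ∀ i x, g i x ≠ ⊤ := fun i x => ENNReal.mul_ne_top ofReal_ne_top (hft i x)
  have hp0' : (0:ℝ) ≤ p := hp0.le
  have hp10 : (0:ℝ) ≤ p - 1 := by linarith
  -- rewrite each term as an integral of g
  have h1 : ∀ i, ENNReal.ofReal (a i ^ p) * ∫⁻ x, f i x ^ p ∂μ
      = ∫⁻ x, g i x ^ p ∂μ := by
    intro i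
    rw [← lintegral_const_mul _ ((hf i).pow_const p)]
    refine lintegral_congr fun x => ?_
    rw [hg]
    simp only
    rw [ENNReal.mul_rpow_of_nonneg _ _ hp0', ENNReal.ofReal_rpow_of_nonneg (ha i).le hp0']
  have h2 : ∀ i j, ENNReal.ofReal (a i ^ (p - 1) * a j) *
        ∫⁻ x, f i x ^ (p - 1) * f j x ∂μ
      = ∫⁻ x, g i x ^ (p - 1) * g j x ∂μ := by
    intro i j
    rw [← lintegral_const_mul _ (show Measurable fun x => f i x ^ (p - 1) * f j x from ((hf i).pow_const (p - 1)).mul (hf j))]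
    refine lintegral_congr fun x => ?_
    rw [hg]
    simp only
    rw [ENNReal.mul_rpow_of_nonneg _ _ hp10, ENNReal.ofReal_rpow_of_nonneg (ha i).le hp10,
      ENNReal.ofReal_mul (Real.rpow_nonneg (ha i).le _)]
    ring
  simp only [h1, h2]
  rw [← lintegral_finset_sum _ (fun i _ => (hgm i).pow_const p)]
  have hsum2 : ∀ i : Fin d, ∑ j ∈ Finset.univ \ {i}, ∫⁻ x, g i x ^ (p - 1) * g j x ∂μ
      = ∫⁻ x, ∑ j ∈ Finset.univ \ {i}, g i x ^ (p - 1) * g j x ∂μ := by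
    intro i
    rw [lintegral_finset_sum _ (fun j _ => (show Measurable fun x => g i x ^ (p - 1) * g j x from ((hgm i).pow_const (p - 1)).mul (hgm j)))]
  simp only [hsum2]
  rw [← lintegral_finset_sum _ (fun i _ => Finset.measurable_sum _
      (fun j _ => (show Measurable fun x => g i x ^ (p - 1) * g j x from ((hgm i).pow_const (p - 1)).mul (hgm j)))),
    ← lintegral_const_mul _ (Finset.measurable_sum _ (fun i _ => Finset.measurable_sum _
      (fun j _ => (show Measurable fun x => g i x ^ (p - 1) * g j x from ((hgm i).pow_const (p - 1)).mul (hgm j))))),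
    ← lintegral_add_left (Finset.measurable_sum _ (fun i _ => (hgm i).pow_const p))]
  exact lintegral_mono fun x => ennreal_key p hp (fun i => g i x) (fun i => hgt i x)
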